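/- Let G be a finite simple graph with positive integer vertex weights w, let k be a positive integer, and let G' be the unweighted graph obtained from G by attaching to every vertex v a new pendant path on w(v) − 1 new vertices (one endpoint of the path is made adjacent to v). If there exists S ⊆ V(G) such that |S| + max_{D ∈ cc(G−S)} w(D) ≤ k and additionally |S| + w(v) − 1 ≤ k for every v ∈ S, then vi(G') ≤ k. -/

import Mathlib

open SimpleGraph

variable {V : Type*}

/-- The vertex sets of the connected components of `G − S`
(the subgraph of `G` induced on the complement of `S`). -/
def ccSets {W : Type*} (G : SimpleGraph W) (S : Set W) : Set (Set W) :=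
  {D | ∃ c : (G.induce Sᶜ).ConnectedComponent, D = Subtype.val '' c.supp}

/-- The total weight of a set of vertices. -/
noncomputable def wsum {W : Type*} (w : W → ℕ) (A : Set W) : ℕ := ∑ᶠ v ∈ A, w v

/-- The vertex integrity of an unweighted graph `H`:
`vi(H) = min_{S ⊆ V(H)} ( |S| + max_{D ∈ cc(H−S)} |D| )`,
the maximum over an empty collection being `0`. -/
noncomputable def vi {W : Type*} (H : SimpleGraph W) : ℕ :=
  sInf {k | ∃ S : Set W, k = S.ncard + sSup (Set.ncard '' ccSets H S)}

/-- The graph `G'` obtained from `G` by attaching to every vertex `v` a pendant path on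
`w(v) − 1` new vertices; the new vertex `(v, 0)` is adjacent to `v`, and `(v, i)` is
adjacent to `(v, i+1)`. -/
def pendGraph (G : SimpleGraph V) (w : V → ℕ) :
    SimpleGraph (V ⊕ (Σ v : V, Fin (w v - 1))) :=
  SimpleGraph.fromRel (fun a b => match a, b with
    | Sum.inl a, Sum.inl b => G.Adj a b
    | Sum.inl a, Sum.inr q => a = q.1 ∧ (q.2 : ℕ) = 0
    | Sum.inr q, Sum.inr r => q.1 = r.1 ∧ (r.2 : ℕ) = (q.2 : ℕ) + 1
    | _, _ => False)

/-- projection to the base vertex -/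
def fm (w : V → ℕ) : (V ⊕ (Σ v : V, Fin (w v - 1))) → V := Sum.elim id Sigma.fst

lemma adj_inr {q : Σ v : V, Fin (w v - 1)} {y} (h : (pendGraph G w).Adj (Sum.inr q) y) :
    y = Sum.inl q.1 ∨ ∃ i : Fin (w q.1 - 1), y = Sum.inr ⟨q.1, i⟩ := by
  rw [pendGraph, fromRel_adj] at h
  obtain ⟨a, i⟩ := q
  rcases y with b | ⟨b, j⟩
  · rcases h.2 with h | h
    · cases h
    · exact Or.inl (by rw [h.1])
  · rcases h.2 with h | h
    · obtain ⟨h1, -⟩ := h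
      dsimp at h1
      subst h1
      exact Or.inr ⟨j, rfl⟩
    · obtain ⟨h1, -⟩ := h
      dsimp at h1
      subst h1
      exact Or.inr ⟨j, rfl⟩

lemma adj_inl_inl {a b : V} (h : (pendGraph G w).Adj (Sum.inl a) (Sum.inl b)) : G.Adj a b := by
  rw [pendGraph, fromRel_adj] at h
  rcases h.2 with h | h
  · exact h
  · exact h.symm

lemma adj_inl_inr {a : V} {q : Σ v : V, Fin (w v - 1)}
    (h : (pendGraph G w).Adj (Sum.inl a) (Sum.inr q)) : q.1 = a := by
  rw [pendGraph, fromRel_adj] at h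
  rcases h.2 with h | h
  · exact h.1.symm
  · cases h

lemma pathcomp {S : Set V} {a : V} (ha : a ∈ S) :
    ∀ {x y : ↥((Sum.inl '' S : Set (V ⊕ (Σ v : V, Fin (w v - 1))))ᶜ)},
      ((pendGraph G w).induce ((Sum.inl '' S)ᶜ)).Walk x y →
      ∀ i : Fin (w a - 1), (x : V ⊕ (Σ v : V, Fin (w v - 1))) = Sum.inr ⟨a, i⟩ →
      ∃ j : Fin (w a - 1), (y : V ⊕ (Σ v : V, Fin (w v - 1))) = Sum.inr ⟨a, j⟩ := by
  intro x y p
  induction p with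
  | nil => exact fun i hi => ⟨i, hi⟩
  | @cons u v y h p ih =>
    intro i hi
    have hadj : (pendGraph G w).Adj ↑u ↑v := h
    rw [hi] at hadj
    rcases adj_inr hadj with h' | ⟨j, h'⟩
    · exact absurd ⟨a, ha, h'.symm⟩ v.prop
    · exact ih j h'

lemma adj_fm {x y} (h : (pendGraph G w).Adj x y) :
    fm w x = fm w y ∨ G.Adj (fm w x) (fm w y) := by
  rcases x with a | q <;> rcases y with b | r
  · exact Or.inr (adj_inl_inl h)
  · exact Or.inl (adj_inl_inr h).symm
  · exact Or.inl (adj_inl_inr h.symm)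
  · rcases adj_inr h with h' | ⟨i, h'⟩
    · cases h'
    · rw [h']
      exact Or.inl rfl

lemma proj {S : Set V} :
    ∀ {x y : ↥((Sum.inl '' S : Set (V ⊕ (Σ v : V, Fin (w v - 1))))ᶜ)},
      ((pendGraph G w).induce ((Sum.inl '' S)ᶜ)).Walk x y →
      (∀ z, ((pendGraph G w).induce ((Sum.inl '' S)ᶜ)).Reachable x z → fm w ↑z ∉ S) →
      ∀ (hx : fm w ↑x ∈ Sᶜ) (hy : fm w ↑y ∈ Sᶜ),
      (G.induce Sᶜ).Reachable ⟨fm w ↑x, hx⟩ ⟨fm w ↑y, hy⟩ := by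
  intro x y p
  induction p with
  | nil => exact fun _ hx hy => Reachable.refl _
  | @cons u v y h p ih =>
    intro hall hx hy
    have hruv : ((pendGraph G w).induce ((Sum.inl '' S)ᶜ)).Reachable u v := h.reachable
    have hall' : ∀ z, ((pendGraph G w).induce ((Sum.inl '' S)ᶜ)).Reachable v z → fm w ↑z ∉ S :=
      fun z hz => hall z (hruv.trans hz)
    have hv : fm w ↑v ∈ Sᶜ := hall v hruv
    have step : (G.induce Sᶜ).Reachable ⟨fm w ↑u, hx⟩ ⟨fm w ↑v, hv⟩ := by
      have hadj : (pendGraph G w).Adj ↑u ↑v := h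
      rcases adj_fm hadj with heq | hGadj
      · have he : (⟨fm w ↑u, hx⟩ : ↥Sᶜ) = ⟨fm w ↑v, hv⟩ := Subtype.ext heq
        rw [he]
      · have h1 : (G.induce Sᶜ).Adj ⟨fm w ↑u, hx⟩ ⟨fm w ↑v, hv⟩ := by
          rw [comap_adj]
          exact hGadj
        exact h1.reachable
    exact step.trans (ih hall' hv hy)


lemma wsum_eq {w : V → ℕ} {A : Set V} (hA : A.Finite) :
    wsum w A = ∑ v ∈ hA.toFinset, w v := by
  rw [wsum, ← finsum_mem_coe_finset, hA.coe_toFinset]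

lemma wsum_mono {w : V → ℕ} {A B : Set V} (hAB : A ⊆ B) (hB : B.Finite) :
    wsum w A ≤ wsum w B := by
  rw [wsum_eq (hB.subset hAB), wsum_eq hB]
  exact Finset.sum_le_sum_of_subset (Set.Finite.toFinset_subset_toFinset.mpr hAB)

lemma ncard_le_wsum {w : V → ℕ} (hw : ∀ v, 0 < w v)
    (A : Set (V ⊕ (Σ v : V, Fin (w v - 1)))) (hA : A.Finite) :
    A.ncard ≤ wsum w (fm w '' A) := by
  classical
  have hB : (fm w '' A).Finite := hA.image _
  rw [wsum_eq hB, Set.ncard_eq_toFinset_card A hA]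
  rw [Finset.card_eq_sum_card_fiberwise (f := fm w) (t := hB.toFinset)
      (fun x hx => by
        simp only [Finset.mem_coe, Set.Finite.mem_toFinset] at hx ⊢
        exact ⟨x, hx, rfl⟩)]
  refine Finset.sum_le_sum fun b hb => ?_
  have hcard : ((hA.toFinset).filter (fun x => fm w x = b)).card ≤ (Finset.range (w b)).card := by
    refine Finset.card_le_card_of_injOn
      (fun x => Sum.elim (fun _ => 0) (fun q => (q.2 : ℕ) + 1) x) (fun x hx => ?_) ?_
    · simp only [Finset.coe_filter, Set.mem_setOf_eq, Finset.mem_filter] at hx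
      rcases x with a | ⟨a, i⟩
      · simpa using hw b
      · have hb' : a = b := hx.2
        subst hb'
        have hi : (i : ℕ) < w a - 1 := i.2
        have hwa := hw a
        simp only [Sum.elim_inr, Finset.mem_coe, Finset.mem_range]
        omega
    · intro x hx y hy hxy
      simp only [Finset.coe_filter, Set.mem_setOf_eq, Finset.mem_filter] at hx hy
      rcases x with a | ⟨a, i⟩ <;> rcases y with c | ⟨c, j⟩
      · have h1 : a = b := hx.2
        have h2 : c = b := hy.2
        rw [h1, h2]
      · simp only [Sum.elim_inl, Sum.elim_inr] at hxy
        omega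
      · simp only [Sum.elim_inl, Sum.elim_inr] at hxy
        omega
      · have h1 : a = b := hx.2
        have h2 : c = b := hy.2
        have hac : a = c := h1.trans h2.symm
        subst hac
        simp only [Sum.elim_inr] at hxy
        have : (i : ℕ) = (j : ℕ) := by omega
        have : i = j := Fin.ext this
        rw [this]
  simpa using hcard

/-- If `G` has a set `S` with `|S| + max_{D ∈ cc(G−S)} w(D) ≤ k` and moreover
`|S| + w(v) − 1 ≤ k` for every `v ∈ S`, then the graph `G'` obtained by attaching to every
vertex `v` a pendant path on `w(v) − 1` vertices satisfies `vi(G') ≤ k`. -/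
theorem vi_pendGraph_of_swvi [Fintype V] (G : SimpleGraph V) (w : V → ℕ)
    (hw : ∀ v, 0 < w v) (k : ℕ) (hk : 0 < k)
    (h : ∃ S : Set V, S.ncard + sSup (wsum w '' ccSets G S) ≤ k ∧
      ∀ v ∈ S, S.ncard + w v - 1 ≤ k) :
    vi (pendGraph G w) ≤ k := by
  classical
  obtain ⟨S, h1, h2⟩ := h
  have hSk : S.ncard ≤ k := le_trans (Nat.le_add_right _ _) h1
  set S' : Set (V ⊕ (Σ v : V, Fin (w v - 1))) := Sum.inl '' S with hS'
  have hbound : ∀ n ∈ Set.ncard '' ccSets (pendGraph G w) S', n ≤ k - S.ncard := by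
    rintro n ⟨D, ⟨c, rfl⟩, rfl⟩
    obtain ⟨x₀, hx₀⟩ := Quot.exists_rep c
    by_cases hcase : ∃ a, a ∈ S ∧ ∃ i : Fin (w a - 1),
        (↑x₀ : V ⊕ (Σ v : V, Fin (w v - 1))) = Sum.inr ⟨a, i⟩
    · obtain ⟨a, ha, i, hxi⟩ := hcase
      have h2a := h2 a ha
      have hwa := hw a
      have hsub : Subtype.val '' c.supp ⊆
          Set.range (fun j : Fin (w a - 1) => (Sum.inr ⟨a, j⟩ : V ⊕ (Σ v : V, Fin (w v - 1)))) := by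
        rintro _ ⟨z, hz, rfl⟩
        have hr : ((pendGraph G w).induce S'ᶜ).Reachable x₀ z :=
          ConnectedComponent.exact (hx₀.trans ((c.mem_supp_iff z).mp hz).symm)
        obtain ⟨p⟩ := hr
        obtain ⟨j, hj⟩ := pathcomp ha p i hxi
        exact ⟨j, hj.symm⟩
      have hle1 : (Subtype.val '' c.supp).ncard ≤ w a - 1 := by
        refine le_trans (Set.ncard_le_ncard hsub (Set.finite_range _)) ?_
        rw [← Set.image_univ]
        refine le_trans (Set.ncard_image_le Set.finite_univ) ?_
        simp [Set.ncard_univ, Nat.card_eq_fintype_card]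
      omega
    · have hnot : ∀ z : ↥S'ᶜ, z ∈ c.supp → fm w ↑z ∉ S := by
        intro z hz hfz
        have hr : ((pendGraph G w).induce S'ᶜ).Reachable z x₀ :=
          ConnectedComponent.exact (((c.mem_supp_iff z).mp hz).trans hx₀.symm)
        rcases hzv : (↑z : V ⊕ (Σ v : V, Fin (w v - 1))) with v | ⟨a2, i2⟩
        · have hfz' : v ∈ S := by rwa [hzv] at hfz
          exact z.prop ⟨v, hfz', hzv.symm⟩
        · have ha2 : a2 ∈ S := by rwa [hzv] at hfz
          obtain ⟨p⟩ := hr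
          obtain ⟨j, hj⟩ := pathcomp ha2 p i2 hzv
          exact hcase ⟨a2, ha2, j, hj⟩
      have hx₀mem : x₀ ∈ c.supp := (c.mem_supp_iff x₀).mpr hx₀
      have hx₀S : fm w ↑x₀ ∈ Sᶜ := hnot x₀ hx₀mem
      set d := (G.induce Sᶜ).connectedComponentMk ⟨fm w ↑x₀, hx₀S⟩ with hd
      have himg : fm w '' (Subtype.val '' c.supp) ⊆ Subtype.val '' d.supp := by
        rintro _ ⟨_, ⟨z, hz, rfl⟩, rfl⟩
        have hr : ((pendGraph G w).induce S'ᶜ).Reachable x₀ z :=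
          ConnectedComponent.exact (hx₀.trans ((c.mem_supp_iff z).mp hz).symm)
        obtain ⟨p⟩ := hr
        have hzS : fm w ↑z ∈ Sᶜ := hnot z hz
        have hreach := proj p
          (fun z' hz' => hnot z' ((c.mem_supp_iff z').mpr
            ((ConnectedComponent.sound hz').symm.trans hx₀)))
          hx₀S hzS
        refine ⟨⟨fm w ↑z, hzS⟩, ?_, rfl⟩
        rw [ConnectedComponent.mem_supp_iff, hd]
        exact (ConnectedComponent.sound hreach).symm
      have hccfin : (wsum w '' ccSets G S).Finite := (Set.toFinite _).image _
      have hmem : wsum w (Subtype.val '' d.supp) ∈ wsum w '' ccSets G S := ⟨_, ⟨d, rfl⟩, rfl⟩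
      have hle2 : wsum w (Subtype.val '' d.supp) ≤ sSup (wsum w '' ccSets G S) :=
        le_csSup hccfin.bddAbove hmem
      have hle1 : (Subtype.val '' c.supp).ncard ≤ wsum w (fm w '' (Subtype.val '' c.supp)) :=
        ncard_le_wsum hw _ (Set.toFinite _)
      have hle3 : wsum w (fm w '' (Subtype.val '' c.supp)) ≤ wsum w (Subtype.val '' d.supp) :=
        wsum_mono himg (Set.toFinite _)
      omega
  have hsup : sSup (Set.ncard '' ccSets (pendGraph G w) S') ≤ k - S.ncard := csSup_le' hbound
  have hS'card : S'.ncard = S.ncard := Set.ncard_image_of_injective S Sum.inl_injective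
  have hvi : vi (pendGraph G w) ≤
      S'.ncard + sSup (Set.ncard '' ccSets (pendGraph G w) S') :=
    Nat.sInf_le ⟨S', rfl⟩
  omega
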